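/- Let M be a separative commutative additive monoid and a ∈ M. Then the following are equivalent: (i) sr(a) < ∞; (ii) sr(a) ≤ 2; (iii) a is Hermite. Consequently, every element of a separative commutative monoid has stable rank 1, 2, or ∞. -/

import Mathlib

/-- `a` satisfies the `n`-stable rank condition in `M`. -/
def SRCond {M : Type*} [AddCommMonoid M] (a : M) (n : ℕ) : Prop :=
  ∀ x y : M, n • a + x = a + y → ∃ e : M, n • a = a + e ∧ e + x = y

/-- The stable rank of `a`: the least positive integer `n` such that `a` satisfies
the `n`-stable rank condition, or `∞` if no such `n` exists. -/
noncomputable def sr {M : Type*} [AddCommMonoid M] (a : M) : ℕ∞ :=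
  sInf {n : ℕ∞ | ∃ m : ℕ, 0 < m ∧ SRCond a m ∧ n = (m : ℕ∞)}

section Aux

variable {M : Type*} [AddCommMonoid M]

/-- Separative cancellation core: if `3s = 2s + t` and `s + n t = (n+1) t` for some
positive `n`, then `s = t`. -/
theorem sep_cancel_core (hsep : ∀ x y : M, 2 • x = x + y → x + y = 2 • y → x = y)
    {s t : M} {n : ℕ} (hn : 0 < n)
    (H1 : s + s + s = s + s + t) (H2 : s + n • t = (n + 1) • t) : s = t := by
  -- Step 1: `2s = s + t`.
  have H1' : 2 • s = s + t := by
    apply hsep (2 • s) (s + t)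
    · -- 2•(2•s) = 2•s + (s+t)
      rw [two_nsmul, two_nsmul]
      calc s + s + (s + s) = s + (s + s + s) := by abel
        _ = s + (s + s + t) := by rw [H1]
        _ = s + s + (s + t) := by abel
    · -- 2•s + (s+t) = 2•(s+t)
      rw [two_nsmul, two_nsmul]
      calc s + s + (s + t) = (s + s + s) + t := by abel
        _ = (s + s + t) + t := by rw [H1]
        _ = s + t + (s + t) := by abel
  -- Step 2: downward induction on `k` : from `s + (k+1)t = (k+2)t` get `s + t = 2t`.
  have key : ∀ k : ℕ, s + (k + 1) • t = (k + 2) • t → s + t = 2 • t := by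
    intro k
    induction k with
    | zero => intro h; simpa [one_nsmul, two_nsmul] using h
    | succ m ih =>
      intro h
      apply ih
      apply hsep (s + (m + 1) • t) ((m + 2) • t)
      · -- 2•(s + (m+1)t) = (s + (m+1)t) + (m+2)t
        rw [two_nsmul]
        calc s + (m + 1) • t + (s + (m + 1) • t)
            = 2 • s + (m • t + m • t + t + t) := by
              rw [two_nsmul, succ_nsmul]; abel
          _ = (s + t) + (m • t + m • t + t + t) := by rw [H1']
          _ = s + (m + 1) • t + (m + 2) • t := by
              rw [succ_nsmul, succ_nsmul, succ_nsmul]; abel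
      · -- (s + (m+1)t) + (m+2)t = 2•((m+2)t)
        have h' := congrArg (· + (m + 1) • t) h
        -- h' : s + (m+2)•t + (m+1)•t = (m+3)•t + (m+1)•t
        calc s + (m + 1) • t + (m + 2) • t
            = s + (m + 1 + 1) • t + (m + 1) • t := by
              rw [succ_nsmul, succ_nsmul]; abel
          _ = (m + 1 + 2) • t + (m + 1) • t := h'
          _ = 2 • ((m + 2) • t) := by
              simp only [two_nsmul, succ_nsmul]; abel
  have H2' : s + t = 2 • t := by
    obtain ⟨k, rfl⟩ : ∃ k, n = k + 1 := ⟨n - 1, (Nat.succ_pred_eq_of_pos hn).symm⟩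
    exact key k H2
  exact hsep s t H1' H2'

theorem key_identity {a x y : M} (hxy : 2 • a + x = a + y) :
    ∀ m : ℕ, a + m • y = (m + 1) • a + m • x := by
  intro m
  induction m with
  | zero => simp
  | succ k ih =>
    calc a + (k + 1) • y = (a + k • y) + y := by rw [succ_nsmul]; abel
      _ = ((k + 1) • a + k • x) + y := by rw [ih]
      _ = (k • a + k • x) + (a + y) := by rw [succ_nsmul]; abel
      _ = (k • a + k • x) + (2 • a + x) := by rw [← hxy]
      _ = (k + 1 + 1) • a + (k + 1) • x := by
          simp only [two_nsmul, succ_nsmul]; abel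

/-- Core: in a separative monoid, the `n`-stable rank condition implies Hermite. -/
theorem hermite_of_srcond (hsep : ∀ x y : M, 2 • x = x + y → x + y = 2 • y → x = y)
    {a : M} {n : ℕ} (hn : 0 < n) (h : SRCond a n) :
    ∀ x y : M, 2 • a + x = a + y → a + x = y := by
  intro x y hxy
  obtain ⟨F, hF1, hF2⟩ := h (a + n • x) (n • y) (by
    rw [key_identity hxy n, succ_nsmul]; abel)
  -- hF2 : F + (a + n • x) = n • y
  have h1 : (a + x) + a = y + a := by
    calc (a + x) + a = 2 • a + x := by rw [two_nsmul]; abel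
      _ = a + y := hxy
      _ = y + a := by abel
  have H1 : (a + x) + (a + x) + (a + x) = (a + x) + (a + x) + y := by
    have h' := congrArg (· + (a + x)) h1
    calc (a + x) + (a + x) + (a + x) = ((a + x) + a + (a + x)) + x := by abel
      _ = (y + a + (a + x)) + x := by rw [h']
      _ = (a + x) + (a + x) + y := by abel
  have H2 : (a + x) + n • y = (n + 1) • y := by
    have h' := congrArg (· + (F + n • x)) h1
    -- h' : (a + x) + a + (F + n • x) = y + a + (F + n • x)
    calc (a + x) + n • y = (a + x) + (F + (a + n • x)) := by rw [hF2]
      _ = (a + x) + a + (F + n • x) := by abel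
      _ = y + a + (F + n • x) := h'
      _ = y + (F + (a + n • x)) := by abel
      _ = y + n • y := by rw [hF2]
      _ = (n + 1) • y := by rw [succ_nsmul]; abel
  exact sep_cancel_core hsep hn H1 H2

theorem srcond_two_of_hermite {a : M}
    (h : ∀ x y : M, 2 • a + x = a + y → a + x = y) : SRCond a 2 := by
  intro x y hxy
  exact ⟨a, two_nsmul a, h x y hxy⟩

end Aux

theorem stmt_16 {M : Type*} [AddCommMonoid M]
    (hsep : ∀ x y : M, 2 • x = x + y → x + y = 2 • y → x = y) (a : M) :
    List.TFAE [sr a < ⊤, sr a ≤ 2,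
      ∀ x y : M, 2 • a + x = a + y → a + x = y] ∧
    (sr a = 1 ∨ sr a = 2 ∨ sr a = ⊤) := by
  have h13 : sr a < ⊤ → ∀ x y : M, 2 • a + x = a + y → a + x = y := by
    intro h
    rw [sr, sInf_lt_iff] at h
    obtain ⟨b, ⟨m, hm, hc, rfl⟩, -⟩ := h
    exact hermite_of_srcond hsep hm hc
  have h32 : (∀ x y : M, 2 • a + x = a + y → a + x = y) → sr a ≤ 2 := by
    intro h
    refine sInf_le ⟨2, by norm_num, srcond_two_of_hermite h, by norm_num⟩
  have h21 : sr a ≤ 2 → sr a < ⊤ :=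
    fun h => lt_of_le_of_lt h (lt_top_iff_ne_top.mpr (by decide))
  have hone : 1 ≤ sr a := by
    apply le_sInf
    rintro b ⟨m, hm, -, rfl⟩
    exact_mod_cast hm
  constructor
  · tfae_have 1 → 3 := h13
    tfae_have 3 → 2 := h32
    tfae_have 2 → 1 := h21
    tfae_finish
  · rcases eq_or_ne (sr a) ⊤ with h | h
    · exact Or.inr (Or.inr h)
    · have hle : sr a ≤ 2 := h32 (h13 (lt_top_iff_ne_top.mpr h))
      lift sr a to ℕ using h with m hm
      have h1 : 1 ≤ m := by exact_mod_cast hone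
      have h2 : m ≤ 2 := by exact_mod_cast hle
      interval_cases m
      · exact Or.inl (by norm_num)
      · exact Or.inr (Or.inl (by norm_num))
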